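/- Let A be a Boolean algebra that is ω-free over G ⊆ A, and let H be the subset of A consisting of 0, 1, and all infima of nonempty finite subsets of G. Then for every subset M ⊆ H \ {0}, there exists a Boolean algebra homomorphism f from A into the powerset Boolean algebra of M such that f(h) = {m ∈ M : m ≤ h} for every h ∈ H. (Consequently every ω-free Boolean algebra is a semigroup algebra.) -/

import Mathlib

universe u v

/-- A function `f` (restricted to `X`) is ω-preserving: for every finite `H ⊆ X`
with `inf H = ⊥`, the infimum of the image is `⊥`. -/
def OmegaPreserving {α : Type u} {β : Type v} [BooleanAlgebra α] [BooleanAlgebra β]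
    (X : Set α) (f : α → β) : Prop :=
  ∀ H : Finset α, ↑H ⊆ X → H.inf id = ⊥ → H.inf f = ⊥

/-- `A` is ω-free over `X`: every ω-preserving function from `X` into any nontrivial
Boolean algebra extends to a unique Boolean algebra homomorphism. -/
def OmegaFree {α : Type u} [BooleanAlgebra α] (X : Set α) : Prop :=
  ∀ (β : Type v) [BooleanAlgebra β] [Nontrivial β] (f : α → β),
    OmegaPreserving X f → ∃! g : BoundedLatticeHom α β, ∀ x ∈ X, g x = f x

lemma mem_finset_inf_set {α : Type u} {M : Type v} (F : Finset α) (f : α → Set M) (m : M) :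
    m ∈ F.inf f ↔ ∀ x ∈ F, m ∈ f x := by
  classical
  induction F using Finset.induction with
  | empty => simp
  | insert _ _ h ih => simp [ih]

/-- Let `A` be ω-free over `G`, and let `H` consist of `⊥`, `⊤`, and all infima of
nonempty finite subsets of `G`.  Then for every `M ⊆ H \ {⊥}` there is a Boolean
algebra homomorphism `f` from `A` to the powerset algebra of `M` with
`f h = {m ∈ M : m ≤ h}` for all `h ∈ H`. -/
theorem omegaFree_semigroupAlgebra {α : Type u} [BooleanAlgebra α] (G : Set α)
    (hfree : OmegaFree.{u, u} G)
    (H : Set α)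
    (hH : H = {⊥, ⊤} ∪ {a : α | ∃ F : Finset α, ↑F ⊆ G ∧ F.Nonempty ∧ a = F.inf id})
    (M : Set α) (hM : M ⊆ H \ {⊥}) :
    ∃ f : BoundedLatticeHom α (Set ↥M),
      ∀ h ∈ H, f h = {m : ↥M | (m : α) ≤ h} := by
  by_cases hMe : M.Nonempty
  · have : Nontrivial (Set ↥M) := by
      obtain ⟨m, hm⟩ := hMe
      exact ⟨∅, Set.univ, by
        intro h
        exact absurd (h ▸ Set.mem_univ (⟨m, hm⟩ : ↥M)) (Set.notMem_empty _)⟩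
    set f0 : α → Set ↥M := fun a => {m : ↥M | (m : α) ≤ a} with hf0
    have hne : ∀ m : ↥M, (m : α) ≠ ⊥ := by
      rintro ⟨m, hm⟩
      exact (hM hm).2
    have hpres : OmegaPreserving G f0 := by
      intro F hFG hFinf
      ext m
      simp only [Set.bot_eq_empty, Set.mem_empty_iff_false, iff_false]
      intro hmem
      rw [mem_finset_inf_set] at hmem
      have : (m : α) ≤ F.inf id := Finset.le_inf fun x hx => hmem x hx
      rw [hFinf, le_bot_iff] at this
      exact hne m this
    obtain ⟨g, hg, -⟩ := hfree (Set ↥M) f0 hpres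
    refine ⟨g, ?_⟩
    intro h hh
    rw [hH] at hh
    simp only [Set.mem_union, Set.mem_insert_iff, Set.mem_singleton_iff, Set.mem_setOf_eq] at hh
    obtain (rfl | rfl) | ⟨F, hFG, hFne, rfl⟩ := hh
    · ext m
      simp only [map_bot, Set.bot_eq_empty, Set.mem_empty_iff_false, Set.mem_setOf_eq,
        false_iff, le_bot_iff]
      exact hne m
    · ext m
      simp [map_top, Set.top_eq_univ]
    · have h1 : g (F.inf id) = F.inf (fun x => g x) := by
        simpa using map_finset_inf g F id
      rw [h1]
      ext m
      rw [mem_finset_inf_set]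
      simp only [Set.mem_setOf_eq]
      constructor
      · intro hall
        refine Finset.le_inf fun x hx => ?_
        have := hall x hx
        rwa [hg x (hFG hx)] at this
      · intro hle x hx
        rw [hg x (hFG hx)]
        exact le_trans hle (Finset.inf_le hx)
  · have hempty : IsEmpty ↥M := by
      rw [Set.not_nonempty_iff_eq_empty] at hMe
      subst hMe
      exact ⟨fun x => x.2⟩
    have hsub : Subsingleton (Set ↥M) := ⟨fun s t => by ext x; exact hempty.elim x⟩
    refine ⟨⟨⟨⟨fun _ => ∅, fun _ _ => Subsingleton.elim _ _⟩, fun _ _ => Subsingleton.elim _ _⟩,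
      Subsingleton.elim _ _, Subsingleton.elim _ _⟩, fun h _ => Subsingleton.elim _ _⟩
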